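/- Let m ≥ 1, let b be an m×m real matrix, let ψ : Fin m → ℝ, and let ψ̂, χ : Fin m → Fin m → Fin m → ℝ. Suppose that for all sufficiently large r ∈ ℝ (so that r·1 − b is invertible) and for all i, j, k: (1/2)·∑_l ψ_l·( ρ(r)_{l i}·ρ(r)_{j k} − ρ(r)_{l j}·ρ(r)_{i k} ) + ∑_l ρ(r)_{l k}·ψ̂_{i j l} = ∑_{p,q} ρ(r)_{p i}·ρ(r)_{q j}·( χ_{p q k} − ((b_{p q} − b_{q p})/2)·∑_s ψ_s·ρ(r)_{s k} ), where ρ(r) = (r·1 − b)⁻¹. Then ψ̂ = 0. -/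

import Mathlib

open Matrix Filter Topology

/-- **The step `ψ̂ = 0` (comparison of eqs. (29)–(31)).**
If the two integrated forms of `Ψ_{ijk}` agree for all sufficiently large `r`
(with `ρ(r) = (r·1 - b)⁻¹`), then `ψ̂ = 0`. -/
theorem psi_hat_vanishes
    (m : ℕ) (hm : 1 ≤ m) (b : Matrix (Fin m) (Fin m) ℝ)
    (ψ : Fin m → ℝ) (ψhat χ : Fin m → Fin m → Fin m → ℝ)
    (h : ∃ R : ℝ, ∀ r : ℝ, R ≤ r →
      IsUnit (r • (1 : Matrix (Fin m) (Fin m) ℝ) - b) ∧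
      ∀ i j k,
        (1 / 2) * (∑ l, ψ l *
            ((r • (1 : Matrix (Fin m) (Fin m) ℝ) - b)⁻¹ l i
                * (r • (1 : Matrix (Fin m) (Fin m) ℝ) - b)⁻¹ j k
              - (r • (1 : Matrix (Fin m) (Fin m) ℝ) - b)⁻¹ l j
                * (r • (1 : Matrix (Fin m) (Fin m) ℝ) - b)⁻¹ i k))
          + ∑ l, (r • (1 : Matrix (Fin m) (Fin m) ℝ) - b)⁻¹ l k * ψhat i j l
        = ∑ p, ∑ q, (r • (1 : Matrix (Fin m) (Fin m) ℝ) - b)⁻¹ p i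
            * (r • (1 : Matrix (Fin m) (Fin m) ℝ) - b)⁻¹ q j
            * (χ p q k - ((b p q - b q p) / 2)
                * ∑ s, ψ s * (r • (1 : Matrix (Fin m) (Fin m) ℝ) - b)⁻¹ s k)) :
    ψhat = 0 := by
  obtain ⟨R, hR⟩ := h
  -- abbreviation for the resolvent entry
  have hev : ∀ᶠ r : ℝ in atTop,
      r • (r • (1 : Matrix (Fin m) (Fin m) ℝ) - b)⁻¹
        = ((1 : Matrix (Fin m) (Fin m) ℝ) - r⁻¹ • b)⁻¹ := by
    filter_upwards [eventually_ge_atTop R, eventually_ge_atTop (1 : ℝ)] with r hrR hr1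
    have hr0 : r ≠ 0 := by intro h0; rw [h0] at hr1; linarith
    have hAM : r • (1 : Matrix (Fin m) (Fin m) ℝ) - b
        = r • ((1 : Matrix (Fin m) (Fin m) ℝ) - r⁻¹ • b) := by
      rw [smul_sub, smul_smul, mul_inv_cancel₀ hr0, one_smul]
    have hU := (hR r hrR).1
    have hdet : IsUnit ((1 : Matrix (Fin m) (Fin m) ℝ) - r⁻¹ • b).det := by
      rw [hAM] at hU
      have h2 := (Matrix.isUnit_iff_isUnit_det _).1 hU
      rw [Matrix.det_smul] at h2
      exact isUnit_of_mul_isUnit_right h2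
    have hinv : (r • (1 : Matrix (Fin m) (Fin m) ℝ) - b)⁻¹
        = r⁻¹ • ((1 : Matrix (Fin m) (Fin m) ℝ) - r⁻¹ • b)⁻¹ := by
      apply Matrix.inv_eq_right_inv
      rw [hAM, Matrix.smul_mul, Matrix.mul_smul, smul_smul, mul_inv_cancel₀ hr0, one_smul,
        Matrix.mul_nonsing_inv _ hdet]
    rw [hinv, smul_smul, mul_inv_cancel₀ hr0, one_smul]
  -- the limit of `(1 - r⁻¹ b)⁻¹` is `1`
  have hMinv : Tendsto (fun r : ℝ => ((1 : Matrix (Fin m) (Fin m) ℝ) - r⁻¹ • b)⁻¹) atTop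
      (𝓝 (1 : Matrix (Fin m) (Fin m) ℝ)) := by
    have h1 : Tendsto (fun r : ℝ => (1 : Matrix (Fin m) (Fin m) ℝ) - r⁻¹ • b) atTop
        (𝓝 (1 : Matrix (Fin m) (Fin m) ℝ)) := by
      have hc : Continuous (fun s : ℝ => (1 : Matrix (Fin m) (Fin m) ℝ) - s • b) :=
        continuous_const.sub (continuous_id.smul continuous_const)
      have := (hc.tendsto 0).comp tendsto_inv_atTop_zero
      simpa [Function.comp_def] using this
    have hct : ContinuousAt Inv.inv (1 : Matrix (Fin m) (Fin m) ℝ) := by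
      apply continuousAt_matrix_inv
      rw [Matrix.det_one, Ring.inverse_eq_inv']
      exact continuousAt_inv₀ one_ne_zero
    have := hct.tendsto.comp h1
    simpa [Function.comp_def] using this
  -- entrywise limits
  have L1 : ∀ a c : Fin m,
      Tendsto (fun r : ℝ => r * (r • (1 : Matrix (Fin m) (Fin m) ℝ) - b)⁻¹ a c) atTop
        (𝓝 ((1 : Matrix (Fin m) (Fin m) ℝ) a c)) := by
    intro a c
    have hc : Continuous fun M : Matrix (Fin m) (Fin m) ℝ => M a c :=
      (continuous_apply c).comp (continuous_apply a)
    have hlim := (hc.tendsto (1 : Matrix (Fin m) (Fin m) ℝ)).comp hMinv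
    refine Tendsto.congr' ?_ hlim
    filter_upwards [hev] with r hr
    have := congrArg (fun M : Matrix (Fin m) (Fin m) ℝ => M a c) hr
    simpa [Matrix.smul_apply] using this.symm
  have L0 : ∀ a c : Fin m,
      Tendsto (fun r : ℝ => (r • (1 : Matrix (Fin m) (Fin m) ℝ) - b)⁻¹ a c) atTop (𝓝 0) := by
    intro a c
    have h0 : Tendsto (fun r : ℝ =>
        r⁻¹ * (r * (r • (1 : Matrix (Fin m) (Fin m) ℝ) - b)⁻¹ a c)) atTop
        (𝓝 (0 * (1 : Matrix (Fin m) (Fin m) ℝ) a c)) :=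
      tendsto_inv_atTop_zero.mul (L1 a c)
    rw [zero_mul] at h0
    refine Tendsto.congr' ?_ h0
    filter_upwards [eventually_ge_atTop (1 : ℝ)] with r hr
    have hr0 : r ≠ 0 := by intro h0'; rw [h0'] at hr; linarith
    rw [← mul_assoc, inv_mul_cancel₀ hr0, one_mul]
  -- now fix indices and compare limits
  funext i j k
  simp only [Pi.zero_apply]
  -- limit of `r ·` the left-hand side
  have key : Tendsto (fun r : ℝ => r *
      ((1 / 2) * (∑ l, ψ l *
          ((r • (1 : Matrix (Fin m) (Fin m) ℝ) - b)⁻¹ l i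
              * (r • (1 : Matrix (Fin m) (Fin m) ℝ) - b)⁻¹ j k
            - (r • (1 : Matrix (Fin m) (Fin m) ℝ) - b)⁻¹ l j
              * (r • (1 : Matrix (Fin m) (Fin m) ℝ) - b)⁻¹ i k))
        + ∑ l, (r • (1 : Matrix (Fin m) (Fin m) ℝ) - b)⁻¹ l k * ψhat i j l)) atTop
      (𝓝 (ψhat i j k)) := by
    have h1 : (fun r : ℝ => r *
        ((1 / 2) * (∑ l, ψ l *
            ((r • (1 : Matrix (Fin m) (Fin m) ℝ) - b)⁻¹ l i
                * (r • (1 : Matrix (Fin m) (Fin m) ℝ) - b)⁻¹ j k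
              - (r • (1 : Matrix (Fin m) (Fin m) ℝ) - b)⁻¹ l j
                * (r • (1 : Matrix (Fin m) (Fin m) ℝ) - b)⁻¹ i k))
          + ∑ l, (r • (1 : Matrix (Fin m) (Fin m) ℝ) - b)⁻¹ l k * ψhat i j l))
        = (fun r : ℝ =>
          (1 / 2) * (∑ l, ψ l *
            ((r * (r • (1 : Matrix (Fin m) (Fin m) ℝ) - b)⁻¹ l i)
                * (r • (1 : Matrix (Fin m) (Fin m) ℝ) - b)⁻¹ j k
              - (r * (r • (1 : Matrix (Fin m) (Fin m) ℝ) - b)⁻¹ l j)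
                * (r • (1 : Matrix (Fin m) (Fin m) ℝ) - b)⁻¹ i k))
          + ∑ l, (r * (r • (1 : Matrix (Fin m) (Fin m) ℝ) - b)⁻¹ l k) * ψhat i j l) := by
      funext r
      rw [mul_add]
      congr 1
      · rw [mul_left_comm, Finset.mul_sum]
        exact congrArg _ (Finset.sum_congr rfl fun l _ => by ring)
      · rw [Finset.mul_sum]
        exact Finset.sum_congr rfl fun l _ => by ring
    rw [h1]
    have hT : Tendsto (fun r : ℝ =>
        (1 / 2) * (∑ l, ψ l *
          ((r * (r • (1 : Matrix (Fin m) (Fin m) ℝ) - b)⁻¹ l i)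
              * (r • (1 : Matrix (Fin m) (Fin m) ℝ) - b)⁻¹ j k
            - (r * (r • (1 : Matrix (Fin m) (Fin m) ℝ) - b)⁻¹ l j)
              * (r • (1 : Matrix (Fin m) (Fin m) ℝ) - b)⁻¹ i k))
        + ∑ l, (r * (r • (1 : Matrix (Fin m) (Fin m) ℝ) - b)⁻¹ l k) * ψhat i j l) atTop
        (𝓝 ((1 / 2) * (∑ l, ψ l *
          ((1 : Matrix (Fin m) (Fin m) ℝ) l i * 0 - (1 : Matrix (Fin m) (Fin m) ℝ) l j * 0))
          + ∑ l, (1 : Matrix (Fin m) (Fin m) ℝ) l k * ψhat i j l)) :=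
      (tendsto_const_nhds.mul (tendsto_finset_sum _ fun l _ =>
        tendsto_const_nhds.mul (((L1 l i).mul (L0 j k)).sub ((L1 l j).mul (L0 i k))))).add
        (tendsto_finset_sum _ fun l _ => (L1 l k).mul tendsto_const_nhds)
    have hval : (1 / 2) * (∑ l, ψ l *
        ((1 : Matrix (Fin m) (Fin m) ℝ) l i * 0 - (1 : Matrix (Fin m) (Fin m) ℝ) l j * 0))
        + ∑ l, (1 : Matrix (Fin m) (Fin m) ℝ) l k * ψhat i j l = ψhat i j k := by
      simp [Matrix.one_apply, Finset.sum_ite_eq]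
    rwa [hval] at hT
  -- limit of `r ·` the right-hand side
  have key2 : Tendsto (fun r : ℝ => r *
      (∑ p, ∑ q, (r • (1 : Matrix (Fin m) (Fin m) ℝ) - b)⁻¹ p i
          * (r • (1 : Matrix (Fin m) (Fin m) ℝ) - b)⁻¹ q j
          * (χ p q k - ((b p q - b q p) / 2)
              * ∑ s, ψ s * (r • (1 : Matrix (Fin m) (Fin m) ℝ) - b)⁻¹ s k))) atTop
      (𝓝 0) := by
    have h2 : (fun r : ℝ => r *
        (∑ p, ∑ q, (r • (1 : Matrix (Fin m) (Fin m) ℝ) - b)⁻¹ p i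
            * (r • (1 : Matrix (Fin m) (Fin m) ℝ) - b)⁻¹ q j
            * (χ p q k - ((b p q - b q p) / 2)
                * ∑ s, ψ s * (r • (1 : Matrix (Fin m) (Fin m) ℝ) - b)⁻¹ s k)))
        = (fun r : ℝ =>
          ∑ p, ∑ q, (r * (r • (1 : Matrix (Fin m) (Fin m) ℝ) - b)⁻¹ p i)
            * (r • (1 : Matrix (Fin m) (Fin m) ℝ) - b)⁻¹ q j
            * (χ p q k - ((b p q - b q p) / 2)
                * ∑ s, ψ s * (r • (1 : Matrix (Fin m) (Fin m) ℝ) - b)⁻¹ s k)) := by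
      funext r
      rw [Finset.mul_sum]
      refine Finset.sum_congr rfl fun p _ => ?_
      rw [Finset.mul_sum]
      exact Finset.sum_congr rfl fun q _ => by ring
    rw [h2]
    have hT : Tendsto (fun r : ℝ =>
        ∑ p, ∑ q, (r * (r • (1 : Matrix (Fin m) (Fin m) ℝ) - b)⁻¹ p i)
          * (r • (1 : Matrix (Fin m) (Fin m) ℝ) - b)⁻¹ q j
          * (χ p q k - ((b p q - b q p) / 2)
              * ∑ s, ψ s * (r • (1 : Matrix (Fin m) (Fin m) ℝ) - b)⁻¹ s k)) atTop
        (𝓝 (∑ p, ∑ q, (1 : Matrix (Fin m) (Fin m) ℝ) p i * 0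
          * (χ p q k - ((b p q - b q p) / 2) * ∑ s : Fin m, ψ s * 0))) :=
      tendsto_finset_sum _ fun p _ => tendsto_finset_sum _ fun q _ =>
        ((L1 p i).mul (L0 q j)).mul (tendsto_const_nhds.sub
          (tendsto_const_nhds.mul (tendsto_finset_sum _ fun s _ =>
            tendsto_const_nhds.mul (L0 s k))))
    simpa using hT
  -- the two functions agree eventually
  have hFG : (fun r : ℝ => r *
      ((1 / 2) * (∑ l, ψ l *
          ((r • (1 : Matrix (Fin m) (Fin m) ℝ) - b)⁻¹ l i
              * (r • (1 : Matrix (Fin m) (Fin m) ℝ) - b)⁻¹ j k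
            - (r • (1 : Matrix (Fin m) (Fin m) ℝ) - b)⁻¹ l j
              * (r • (1 : Matrix (Fin m) (Fin m) ℝ) - b)⁻¹ i k))
        + ∑ l, (r • (1 : Matrix (Fin m) (Fin m) ℝ) - b)⁻¹ l k * ψhat i j l))
      =ᶠ[atTop] (fun r : ℝ => r *
      (∑ p, ∑ q, (r • (1 : Matrix (Fin m) (Fin m) ℝ) - b)⁻¹ p i
          * (r • (1 : Matrix (Fin m) (Fin m) ℝ) - b)⁻¹ q j
          * (χ p q k - ((b p q - b q p) / 2)
              * ∑ s, ψ s * (r • (1 : Matrix (Fin m) (Fin m) ℝ) - b)⁻¹ s k))) := by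
    filter_upwards [eventually_ge_atTop R] with r hr
    rw [(hR r hr).2 i j k]
  exact tendsto_nhds_unique (Tendsto.congr' hFG key) key2
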